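/- Let Û_k be a unitary with Û_k|φ_0⟩ = |ψ_k⟩, an eigenvector of H with eigenvalue E_k. For any skew-Hermitian Ω with matrix elements Ω_{jl} = ⟨ψ_j|Ω|ψ_l⟩, the Riemannian Hessian bilinear form of f(U) = ⟨φ_0|U†HU|φ_0⟩ at Û_k in direction ΩÛ_k equals 2 Σ_{l=0}^{D−1} (E_l − E_k)|Ω_{lk}|². -/

import Mathlib

open Matrix BigOperators

noncomputable section

/-- Matrix commutator `[A, B] = AB − BA`. -/
def mcomm {D : ℕ} (A B : Matrix (Fin D) (Fin D) ℂ) : Matrix (Fin D) (Fin D) ℂ :=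
  A * B - B * A

/-- Riemannian Hessian applied to the tangent direction `ΩU`:
`Hess f(U)[ΩU] = (1/2)([H,[Ω, UρU†]] + [[H,Ω], UρU†]) U`. -/
def rhess {D : ℕ} (H U ρ Ω : Matrix (Fin D) (Fin D) ℂ) : Matrix (Fin D) (Fin D) ℂ :=
  ((1 / 2 : ℂ) • (mcomm H (mcomm Ω (U * ρ * Uᴴ)) + mcomm (mcomm H Ω) (U * ρ * Uᴴ))) * U

section Helpers

variable {D : ℕ}

lemma mul_vMV (M : Matrix (Fin D) (Fin D) ℂ) (a b : Fin D → ℂ) :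
    M * vecMulVec a b = vecMulVec (M.mulVec a) b := by
  ext i j
  simp [mul_apply, vecMulVec_apply, mulVec, dotProduct, Finset.sum_mul, mul_assoc]

lemma vMV_mul (M : Matrix (Fin D) (Fin D) ℂ) (a b : Fin D → ℂ) :
    vecMulVec a b * M = vecMulVec a (b ᵥ* M) := by
  ext i j
  simp [mul_apply, vecMulVec_apply, vecMul, dotProduct, Finset.mul_sum, mul_assoc]

lemma trace_vMV (a b : Fin D → ℂ) : (vecMulVec a b).trace = b ⬝ᵥ a := by
  simp [trace, diag, vecMulVec_apply, dotProduct, mul_comm]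

lemma vMV_mulVec (a b v : Fin D → ℂ) :
    (vecMulVec a b).mulVec v = (b ⬝ᵥ v) • a := by
  ext i
  simp [vecMulVec_apply, mulVec, dotProduct, Finset.mul_sum, mul_assoc, mul_comm, mul_left_comm]

lemma vMV_mul_vMV (a b c d : Fin D → ℂ) :
    vecMulVec a b * vecMulVec c d = (b ⬝ᵥ c) • vecMulVec a d := by
  ext i j
  simp [mul_apply, vecMulVec_apply, dotProduct, Finset.sum_mul, smul_eq_mul]
  ring_nf
  congr 1
  ext x
  ring

lemma complete (ψ : Fin D → (Fin D → ℂ))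
    (hortho : ∀ j l : Fin D, star (ψ j) ⬝ᵥ ψ l = if j = l then 1 else 0) :
    ∑ l, vecMulVec (ψ l) (star (ψ l)) = (1 : Matrix (Fin D) (Fin D) ℂ) := by
  set A : Matrix (Fin D) (Fin D) ℂ := Matrix.of (fun i l => ψ l i) with hA
  have h1 : Aᴴ * A = 1 := by
    ext j l
    simpa [mul_apply, conjTranspose_apply, hA, dotProduct, one_apply] using hortho j l
  have h2 : A * Aᴴ = 1 := mul_eq_one_comm.mp h1
  ext i m
  have h3 := congrFun (congrFun h2 i) m
  simp only [mul_apply, conjTranspose_apply, hA, Matrix.of_apply] at h3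
  simp only [Matrix.sum_apply, vecMulVec_apply, Pi.star_apply]
  rw [← h3]

lemma skew_dot (Ω : Matrix (Fin D) (Fin D) ℂ) (hΩ : Ωᴴ = -Ω) (a b : Fin D → ℂ) :
    star a ⬝ᵥ Ω.mulVec b = -(starRingEnd ℂ) (star b ⬝ᵥ Ω.mulVec a) := by
  have hc : ∀ i j, (starRingEnd ℂ) (Ω j i) = -Ω i j := by
    intro i j
    have := congrFun (congrFun hΩ i) j
    simpa [conjTranspose_apply] using this
  simp only [dotProduct, mulVec, dotProduct, Pi.star_apply, map_sum,
    Finset.mul_sum, ← Finset.sum_neg_distrib]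
  rw [Finset.sum_comm]
  refine Finset.sum_congr rfl fun j _ => Finset.sum_congr rfl fun i _ => ?_
  simp only [Complex.star_def, _root_.map_mul, hc, Complex.conj_conj]
  ring

lemma dot_sumr (u : Fin D → ℂ) (f : Fin D → Fin D → ℂ) :
    u ⬝ᵥ (∑ j, f j) = ∑ j, u ⬝ᵥ f j := by
  simp only [dotProduct, Finset.sum_apply, Finset.mul_sum]
  exact Finset.sum_comm

lemma dot_suml (u : Fin D → ℂ) (f : Fin D → Fin D → ℂ) :
    (∑ j, f j) ⬝ᵥ u = ∑ j, f j ⬝ᵥ u := by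
  simp only [dotProduct, Finset.sum_apply, Finset.sum_mul]
  exact Finset.sum_comm

lemma mulVec_sumr (M : Matrix (Fin D) (Fin D) ℂ) (f : Fin D → Fin D → ℂ) :
    M.mulVec (∑ j, f j) = ∑ j, M.mulVec (f j) := by
  ext i
  simp only [mulVec, dotProduct, Finset.sum_apply, Finset.mul_sum]
  exact Finset.sum_comm

lemma sum_mulVecl (A : Fin D → Matrix (Fin D) (Fin D) ℂ) (v : Fin D → ℂ) :
    (∑ j, A j).mulVec v = ∑ j, (A j).mulVec v := by
  ext i
  simp only [mulVec, dotProduct, Matrix.sum_apply, Finset.sum_apply, Finset.sum_mul]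
  exact Finset.sum_comm

end Helpers

/-- at a critical point `Û_k` with `Û_k|φ₀⟩ = |ψ_k⟩`, the Hessian
bilinear form in direction `ΩÛ_k` equals `2 Σ_l (E_l − E_k)|Ω_{lk}|²`. -/
theorem hessian_bilinear_form (D : ℕ) (H : Matrix (Fin D) (Fin D) ℂ)
    (E : Fin D → ℝ) (ψ : Fin D → (Fin D → ℂ))
    (hortho : ∀ j l : Fin D, star (ψ j) ⬝ᵥ ψ l = if j = l then 1 else 0)
    (hH : H = ∑ j, (E j : ℂ) • vecMulVec (ψ j) (star (ψ j)))
    (φ0 : Fin D → ℂ) (hφ0 : star φ0 ⬝ᵥ φ0 = 1)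
    (k : Fin D) (Uk : Matrix (Fin D) (Fin D) ℂ)
    (hUk : Uk ∈ Matrix.unitaryGroup (Fin D) ℂ)
    (hcrit : Uk.mulVec φ0 = ψ k)
    (Ω : Matrix (Fin D) (Fin D) ℂ) (hΩ : Ωᴴ = -Ω) :
    (((Ω * Uk)ᴴ * rhess H Uk (vecMulVec φ0 (star φ0)) Ω).trace).re
      = 2 * ∑ l, (E l - E k) * Complex.normSq (star (ψ l) ⬝ᵥ Ω.mulVec (ψ k)) := by
  classical
  -- abbreviations (no `set`, to keep syntactic matching easy)
  have hUρU : Uk * vecMulVec φ0 (star φ0) * Ukᴴ = vecMulVec (ψ k) (star (ψ k)) := by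
    rw [mul_vMV, vMV_mul, hcrit, ← Matrix.star_mulVec, hcrit]
  have hHP : H * vecMulVec (ψ k) (star (ψ k)) = (E k : ℂ) • vecMulVec (ψ k) (star (ψ k)) := by
    rw [hH, Finset.sum_mul]
    simp only [smul_mul_assoc, vMV_mul_vMV, hortho]
    rw [Finset.sum_eq_single k]
    · simp
    · intro j _ hj; simp [hj]
    · intro h; exact absurd (Finset.mem_univ k) h
  have hPH : vecMulVec (ψ k) (star (ψ k)) * H = (E k : ℂ) • vecMulVec (ψ k) (star (ψ k)) := by
    rw [hH, Finset.mul_sum]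
    simp only [Matrix.mul_smul, vMV_mul_vMV, hortho]
    rw [Finset.sum_eq_single k]
    · simp
    · intro j _ hj; simp [Ne.symm hj]
    · intro h; exact absurd (Finset.mem_univ k) h
  have hUU : Uk * Ukᴴ = 1 := by
    have := Matrix.mem_unitaryGroup_iff.mp hUk
    rwa [Matrix.star_eq_conjTranspose] at this
  have hskew : ∀ a b : Fin D → ℂ,
      star a ⬝ᵥ Ω.mulVec b = -(starRingEnd ℂ) (star b ⬝ᵥ Ω.mulVec a) :=
    skew_dot Ω hΩ
  -- expansion of w := Ω ψk in the eigenbasis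
  have hw : Ω.mulVec (ψ k) = ∑ l, (star (ψ l) ⬝ᵥ Ω.mulVec (ψ k)) • ψ l := by
    conv_lhs => rw [show Ω.mulVec (ψ k)
      = (1 : Matrix (Fin D) (Fin D) ℂ).mulVec (Ω.mulVec (ψ k)) from by simp]
    rw [← complete ψ hortho, sum_mulVecl]
    exact Finset.sum_congr rfl fun l _ => by rw [vMV_mulVec]
  -- Parseval
  have hww : star (Ω.mulVec (ψ k)) ⬝ᵥ Ω.mulVec (ψ k)
      = ((∑ l, Complex.normSq (star (ψ l) ⬝ᵥ Ω.mulVec (ψ k)) : ℝ) : ℂ) := by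
    nth_rewrite 1 [hw]
    push_cast
    rw [show star (∑ l, (star (ψ l) ⬝ᵥ Ω.mulVec (ψ k)) • ψ l)
        = ∑ l, (starRingEnd ℂ) (star (ψ l) ⬝ᵥ Ω.mulVec (ψ k)) • star (ψ l) from by
      simp [star_sum, star_smul, Complex.star_def]]
    rw [dot_suml]
    refine Finset.sum_congr rfl fun l _ => ?_
    rw [smul_dotProduct, smul_eq_mul, Complex.normSq_eq_conj_mul_self]
  -- the two scalar quantities
  have hs : star (ψ k) ⬝ᵥ Ω.mulVec (Ω.mulVec (ψ k))
      = -((∑ l, Complex.normSq (star (ψ l) ⬝ᵥ Ω.mulVec (ψ k)) : ℝ) : ℂ) := by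
    rw [hskew (ψ k) (Ω.mulVec (ψ k)), hww]
    simp
  have hT1 : star (ψ k) ⬝ᵥ Ω.mulVec (H.mulVec (Ω.mulVec (ψ k)))
      = -((∑ l, E l * Complex.normSq (star (ψ l) ⬝ᵥ Ω.mulVec (ψ k)) : ℝ) : ℂ) := by
    have hHw : H.mulVec (Ω.mulVec (ψ k))
        = ∑ l, ((E l : ℂ) * (star (ψ l) ⬝ᵥ Ω.mulVec (ψ k))) • ψ l := by
      rw [hH, sum_mulVecl]
      refine Finset.sum_congr rfl fun l _ => ?_
      rw [Matrix.smul_mulVec, vMV_mulVec, smul_smul]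
    rw [hHw, mulVec_sumr, dot_sumr]
    push_cast
    rw [← Finset.sum_neg_distrib]
    refine Finset.sum_congr rfl fun l _ => ?_
    rw [Matrix.mulVec_smul, dotProduct_smul, smul_eq_mul,
      hskew (ψ k) (ψ l), mul_assoc, mul_neg, Complex.mul_conj, mul_neg]
  -- eigenvalue rewrites in all associations needed
  have r1 : H * (vecMulVec (ψ k) (star (ψ k)) * Ω)
      = (E k : ℂ) • (vecMulVec (ψ k) (star (ψ k)) * Ω) := by
    rw [← mul_assoc, hHP, smul_mul_assoc]
  have r2 : Ω * (vecMulVec (ψ k) (star (ψ k)) * H)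
      = (E k : ℂ) • (Ω * vecMulVec (ψ k) (star (ψ k))) := by
    rw [hPH, mul_smul_comm]
  have r3 : Ω * (H * vecMulVec (ψ k) (star (ψ k)))
      = (E k : ℂ) • (Ω * vecMulVec (ψ k) (star (ψ k))) := by
    rw [hHP, mul_smul_comm]
  have r4 : vecMulVec (ψ k) (star (ψ k)) * (H * Ω)
      = (E k : ℂ) • (vecMulVec (ψ k) (star (ψ k)) * Ω) := by
    rw [← mul_assoc, hPH, smul_mul_assoc]
  -- the bracket expression at the critical point
  have hA : mcomm H (mcomm Ω (vecMulVec (ψ k) (star (ψ k))))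
        + mcomm (mcomm H Ω) (vecMulVec (ψ k) (star (ψ k)))
      = (H * (Ω * vecMulVec (ψ k) (star (ψ k))) + H * (Ω * vecMulVec (ψ k) (star (ψ k)))
          + vecMulVec (ψ k) (star (ψ k)) * (Ω * H)
          + vecMulVec (ψ k) (star (ψ k)) * (Ω * H))
        - ((E k : ℂ) • (vecMulVec (ψ k) (star (ψ k)) * Ω)
          + (E k : ℂ) • (Ω * vecMulVec (ψ k) (star (ψ k)))
          + (E k : ℂ) • (Ω * vecMulVec (ψ k) (star (ψ k)))
          + (E k : ℂ) • (vecMulVec (ψ k) (star (ψ k)) * Ω)) := by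
    simp only [mcomm, mul_sub, sub_mul, mul_assoc]
    rw [r1, r2, r3, r4]
    abel
  -- reduce the trace using unitarity and skew-hermiticity
  have htr : ((Ω * Uk)ᴴ * rhess H Uk (vecMulVec φ0 (star φ0)) Ω).trace
      = -(1/2 : ℂ) * (Ω * (mcomm H (mcomm Ω (vecMulVec (ψ k) (star (ψ k))))
          + mcomm (mcomm H Ω) (vecMulVec (ψ k) (star (ψ k))))).trace := by
    rw [rhess, hUρU, conjTranspose_mul, hΩ, Matrix.trace_mul_comm]
    rw [show ((1/2 : ℂ) • (mcomm H (mcomm Ω (vecMulVec (ψ k) (star (ψ k))))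
          + mcomm (mcomm H Ω) (vecMulVec (ψ k) (star (ψ k)))) * Uk) * (Ukᴴ * -Ω)
        = -((1/2 : ℂ) • ((mcomm H (mcomm Ω (vecMulVec (ψ k) (star (ψ k))))
          + mcomm (mcomm H Ω) (vecMulVec (ψ k) (star (ψ k)))) * Ω)) from by
      rw [smul_mul_assoc, smul_mul_assoc, mul_assoc, ← mul_assoc Uk, hUU, one_mul,
        mul_neg, smul_neg]]
    rw [trace_neg, trace_smul, Matrix.trace_mul_comm]
    simp [smul_eq_mul]
  -- the four elementary traces
  have t1 : (Ω * (H * (Ω * vecMulVec (ψ k) (star (ψ k))))).trace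
      = star (ψ k) ⬝ᵥ Ω.mulVec (H.mulVec (Ω.mulVec (ψ k))) := by
    rw [mul_vMV, mul_vMV, mul_vMV, trace_vMV]
  have t2 : (Ω * (vecMulVec (ψ k) (star (ψ k)) * (Ω * H))).trace
      = star (ψ k) ⬝ᵥ Ω.mulVec (H.mulVec (Ω.mulVec (ψ k))) := by
    rw [vMV_mul, mul_vMV, trace_vMV, ← dotProduct_mulVec, ← mulVec_mulVec]
  have t3 : (Ω * (vecMulVec (ψ k) (star (ψ k)) * Ω)).trace
      = star (ψ k) ⬝ᵥ Ω.mulVec (Ω.mulVec (ψ k)) := by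
    rw [vMV_mul, mul_vMV, trace_vMV, ← dotProduct_mulVec]
  have t4 : (Ω * (Ω * vecMulVec (ψ k) (star (ψ k)))).trace
      = star (ψ k) ⬝ᵥ Ω.mulVec (Ω.mulVec (ψ k)) := by
    rw [mul_vMV, mul_vMV, trace_vMV]
  -- put everything together
  have hsum : ∑ l, (E l - E k) * Complex.normSq (star (ψ l) ⬝ᵥ Ω.mulVec (ψ k))
      = (∑ l, E l * Complex.normSq (star (ψ l) ⬝ᵥ Ω.mulVec (ψ k)))
        - E k * ∑ l, Complex.normSq (star (ψ l) ⬝ᵥ Ω.mulVec (ψ k)) := by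
    simp [sub_mul, Finset.sum_sub_distrib, Finset.mul_sum]
  suffices hmain : ((Ω * Uk)ᴴ * rhess H Uk (vecMulVec φ0 (star φ0)) Ω).trace
      = ((2 * ∑ l, (E l - E k) * Complex.normSq (star (ψ l) ⬝ᵥ Ω.mulVec (ψ k)) : ℝ) : ℂ) by
    rw [hmain, Complex.ofReal_re]
  rw [htr, hA]
  simp only [mul_sub, mul_add, mul_smul_comm, trace_sub, trace_add, trace_smul,
    t1, t2, t3, t4, hT1, hs, smul_eq_mul]
  rw [hsum]
  push_cast
  ring
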